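/- Let η, C > 0 and let F : {1,...,M} → R satisfy Σ_x |Δ_{k'} Δ_k F(x)| ≤ C for all integers k, k' with 1 ≤ k, k' ≤ ηM, where Δ_k F(x) = F(x+k) − F(x). Then there exist real numbers m and b such that Σ_{x=1}^M |F(x) − (mx + b)| ≤ cC, where c depends only on η. -/

import Mathlib

open Finset

private lemma sum_shift (g : ℕ → ℝ) (s n : ℕ) :
    ∑ k ∈ Ioc 0 n, g (s + k) = ∑ j ∈ Ioc s (s + n), g j := by
  have h : Ioc s (s + n) = (Ioc 0 n).map (addLeftEmbedding s) := by
    rw [Finset.map_add_left_Ioc, add_zero]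
  rw [h, Finset.sum_map]
  rfl

private lemma telescope (g : ℕ → ℝ) (K x : ℕ) :
    ∑ k ∈ Ioc 0 K, g (x + k) - ∑ k ∈ Ioc 0 K, g k
      = ∑ y ∈ Ioc 0 x, (g (y + K) - g y) := by
  have h1 : ∑ y ∈ Ioc 0 x, g (y + K) = ∑ j ∈ Ioc K (K + x), g j := by
    rw [← sum_shift (fun j => g j) K x]
    exact Finset.sum_congr rfl fun y _ => by rw [add_comm]
  have h2 : ∑ k ∈ Ioc 0 K, g (x + k) = ∑ j ∈ Ioc x (x + K), g j := sum_shift g x K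
  have c1 : (∑ j ∈ Ioc 0 x, g j) + ∑ j ∈ Ioc x (x + K), g j = ∑ j ∈ Ioc 0 (x + K), g j :=
    Finset.sum_Ioc_consecutive g (Nat.zero_le x) (Nat.le_add_right x K)
  have c2 : (∑ j ∈ Ioc 0 K, g j) + ∑ j ∈ Ioc K (K + x), g j = ∑ j ∈ Ioc 0 (K + x), g j :=
    Finset.sum_Ioc_consecutive g (Nat.zero_le K) (Nat.le_add_right K x)
  have c3 : ∑ j ∈ Ioc 0 (x + K), g j = ∑ j ∈ Ioc 0 (K + x), g j := by rw [add_comm]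
  rw [Finset.sum_sub_distrib, h1, h2]
  linarith

private lemma main_aux (M K : ℕ) (F : ℕ → ℝ) (C : ℝ) (hC : 0 < C) (hK : 1 ≤ K)
    (hKM : 8 * K ≤ M)
    (hF : ∀ k k' : ℕ, 1 ≤ k → 1 ≤ k' → k ≤ 2 * K → k' ≤ 2 * K →
      ∑ x ∈ Icc 1 (M - k - k'), |F (x + k + k') - F (x + k) - F (x + k') + F x| ≤ C) :
    ∃ m b : ℝ, ∑ x ∈ Icc 1 M, |F x - (m * x + b)| ≤ (4 * (1 + (M : ℝ) / K) ^ 2 + 1) * C := by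
  have hK0 : (0:ℝ) < K := by exact_mod_cast hK
  have hKne : (K:ℝ) ≠ 0 := ne_of_gt hK0
  set N := M - 2 * K with hNdef
  have hNK : 4 * K ≤ N := by omega
  have hNM : N ≤ M := by omega
  -- general bound on mixed difference sums
  have hD : ∀ k k' A B : ℕ, 1 ≤ k → 1 ≤ k' → k ≤ 2*K → k' ≤ 2*K → B ≤ M - k - k' →
      ∑ x ∈ Ioc A B, |F (x + k + k') - F (x + k) - F (x + k') + F x| ≤ C := by
    intro k k' A B hk hk' hk2 hk'2 hB
    refine le_trans (Finset.sum_le_sum_of_subset_of_nonneg ?_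
      (fun i _ _ => abs_nonneg _)) (hF k k' hk hk' hk2 hk'2)
    intro x hx
    simp only [Finset.mem_Ioc, Finset.mem_Icc] at hx ⊢
    omega
  set a : ℕ → ℝ := fun k' => (∑ k ∈ Ioc 0 K, (F (k + k') - F k)) / K with ha
  set m : ℝ := a K / K with hm
  set b : ℝ := (∑ k' ∈ Ioc 0 K, (F k' - a k')) / K with hb
  -- Step 1
  have step1 : ∀ k' : ℕ, 1 ≤ k' → k' ≤ K →
      ∑ x ∈ Ioc 0 N, |F (x + k') - F x - a k'| ≤ (1 + (N:ℝ)/K) * C := by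
    intro k' hk'1 hk'K
    have hKa : (K:ℝ) * a k' = ∑ k ∈ Ioc 0 K, (F (k + k') - F k) := by
      rw [ha]; field_simp
    have key : ∀ x : ℕ, (K:ℝ) * (F (x + k') - F x - a k')
        = -(∑ k ∈ Ioc 0 K, (F (x + k + k') - F (x + k) - F (x + k') + F x))
          + ∑ y ∈ Ioc 0 x, (F (y + K + k') - F (y + K) - F (y + k') + F y) := by
      intro x
      have t := telescope (fun u => F (u + k') - F u) K x
      have t2 : (∑ k ∈ Ioc 0 K, (F (x + k + k') - F (x + k)))
            - ∑ k ∈ Ioc 0 K, (F (k + k') - F k)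
          = ∑ y ∈ Ioc 0 x, (F (y + K + k') - F (y + K) - F (y + k') + F y) :=
        t.trans (Finset.sum_congr rfl fun y _ => by ring)
      have comb : -(∑ k ∈ Ioc 0 K, (F (x + k + k') - F (x + k) - F (x + k') + F x))
            + ∑ k ∈ Ioc 0 K, (F (x + k + k') - F (x + k))
          = (K:ℝ) * (F (x + k') - F x) := by
        rw [neg_add_eq_sub, ← Finset.sum_sub_distrib]
        rw [Finset.sum_congr rfl (fun k _ => show
          (F (x + k + k') - F (x + k)) - (F (x + k + k') - F (x + k) - F (x + k') + F x)
            = F (x + k') - F x by ring)]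
        rw [Finset.sum_const, Nat.card_Ioc, Nat.sub_zero, nsmul_eq_mul]
      linear_combination t2 - comb - hKa
    have habs : ∀ x : ℕ, (K:ℝ) * |F (x + k') - F x - a k'|
        ≤ (∑ k ∈ Ioc 0 K, |F (x + k + k') - F (x + k) - F (x + k') + F x|)
          + ∑ y ∈ Ioc 0 x, |F (y + K + k') - F (y + K) - F (y + k') + F y| := by
      intro x
      have h1 : (K:ℝ) * |F (x + k') - F x - a k'| = |(K:ℝ) * (F (x + k') - F x - a k')| := by
        rw [abs_mul, abs_of_pos hK0]
      rw [h1, key x]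
      refine le_trans (abs_add_le _ _) (add_le_add ?_ ?_)
      · rw [abs_neg]; exact Finset.abs_sum_le_sum_abs _ _
      · exact Finset.abs_sum_le_sum_abs _ _
    have hsum : (K:ℝ) * ∑ x ∈ Ioc 0 N, |F (x + k') - F x - a k'| ≤ (K:ℝ) * C + (N:ℝ) * C := by
      rw [Finset.mul_sum]
      calc ∑ x ∈ Ioc 0 N, (K:ℝ) * |F (x + k') - F x - a k'|
          ≤ ∑ x ∈ Ioc 0 N, ((∑ k ∈ Ioc 0 K, |F (x + k + k') - F (x + k) - F (x + k') + F x|)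
              + ∑ y ∈ Ioc 0 x, |F (y + K + k') - F (y + K) - F (y + k') + F y|) :=
            Finset.sum_le_sum fun x _ => habs x
        _ = (∑ x ∈ Ioc 0 N, ∑ k ∈ Ioc 0 K, |F (x + k + k') - F (x + k) - F (x + k') + F x|)
              + ∑ x ∈ Ioc 0 N, ∑ y ∈ Ioc 0 x, |F (y + K + k') - F (y + K) - F (y + k') + F y| :=
            Finset.sum_add_distrib
        _ ≤ (K:ℝ) * C + (N:ℝ) * C := by
            gcongr ?_ + ?_
            · rw [Finset.sum_comm]
              calc ∑ k ∈ Ioc 0 K, ∑ x ∈ Ioc 0 N, |F (x + k + k') - F (x + k) - F (x + k') + F x|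
                  ≤ ∑ k ∈ Ioc 0 K, C := by
                    refine Finset.sum_le_sum fun k hk => ?_
                    have hk' := Finset.mem_Ioc.1 hk
                    exact hD k k' 0 N hk'.1 hk'1 (by omega) (by omega) (by omega)
                _ = (K:ℝ) * C := by
                    rw [Finset.sum_const, Nat.card_Ioc, Nat.sub_zero, nsmul_eq_mul]
            · calc ∑ x ∈ Ioc 0 N, ∑ y ∈ Ioc 0 x, |F (y + K + k') - F (y + K) - F (y + k') + F y|
                  ≤ ∑ x ∈ Ioc 0 N, ∑ y ∈ Ioc 0 N, |F (y + K + k') - F (y + K) - F (y + k') + F y| := by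
                    refine Finset.sum_le_sum fun x hx => ?_
                    refine Finset.sum_le_sum_of_subset_of_nonneg
                      (Finset.Ioc_subset_Ioc_right (Finset.mem_Ioc.1 hx).2) fun i _ _ => abs_nonneg _
                _ = (N:ℝ) * ∑ y ∈ Ioc 0 N, |F (y + K + k') - F (y + K) - F (y + k') + F y| := by
                    rw [Finset.sum_const, Nat.card_Ioc, Nat.sub_zero, nsmul_eq_mul]
                _ ≤ (N:ℝ) * C := by
                    have := hD K k' 0 N hK hk'1 (by omega) (by omega) (by omega)
                    have hN0 : (0:ℝ) ≤ (N:ℝ) := Nat.cast_nonneg N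
                    nlinarith
    have heq : (K:ℝ) * ((1 + (N:ℝ)/K) * C) = (K:ℝ) * C + (N:ℝ) * C := by field_simp
    have := hsum.trans_eq heq.symm
    exact le_of_mul_le_mul_left this hK0
  -- Step 2
  have hKb : (K:ℝ) * b = ∑ k' ∈ Ioc 0 K, (F k' - a k') := by
    rw [hb]; field_simp
  have hKm : (K:ℝ) * m = a K := by
    rw [hm]; field_simp
  have key2 : ∀ x : ℕ, (K:ℝ) * (F x - (m * x + b))
      = (∑ k' ∈ Ioc 0 K, (F x - F (x + k') + a k'))
        + ∑ y ∈ Ioc 0 x, (F (y + K) - F y - a K) := by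
    intro x
    have t := telescope F K x
    have e1 : ∑ k' ∈ Ioc 0 K, (F x - F (x + k') + a k')
        = ((K:ℝ) * F x - ∑ k' ∈ Ioc 0 K, F (x + k')) + ∑ k' ∈ Ioc 0 K, a k' := by
      rw [Finset.sum_add_distrib, Finset.sum_sub_distrib, Finset.sum_const, Nat.card_Ioc,
        Nat.sub_zero, nsmul_eq_mul]
    have e2 : ∑ y ∈ Ioc 0 x, (F (y + K) - F y - a K)
        = (∑ y ∈ Ioc 0 x, (F (y + K) - F y)) - (x:ℝ) * a K := by
      rw [Finset.sum_sub_distrib, Finset.sum_const, Nat.card_Ioc, Nat.sub_zero, nsmul_eq_mul]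
    have e3 : ∑ k' ∈ Ioc 0 K, (F k' - a k')
        = (∑ k' ∈ Ioc 0 K, F k') - ∑ k' ∈ Ioc 0 K, a k' := Finset.sum_sub_distrib _ _
    linear_combination -e1 - e2 + t - hKb - e3 - (x:ℝ) * hKm
  have habs2 : ∀ x : ℕ, (K:ℝ) * |F x - (m * x + b)|
      ≤ (∑ k' ∈ Ioc 0 K, |F (x + k') - F x - a k'|)
        + ∑ y ∈ Ioc 0 x, |F (y + K) - F y - a K| := by
    intro x
    have h1 : (K:ℝ) * |F x - (m * x + b)| = |(K:ℝ) * (F x - (m * x + b))| := by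
      rw [abs_mul, abs_of_pos hK0]
    rw [h1, key2 x]
    refine le_trans (abs_add_le _ _) (add_le_add ?_ (Finset.abs_sum_le_sum_abs _ _))
    refine le_trans (Finset.abs_sum_le_sum_abs _ _) (le_of_eq (Finset.sum_congr rfl ?_))
    intro k' _
    rw [← abs_neg]
    congr 1
    ring
  set C1 : ℝ := (1 + (N:ℝ)/K) * C with hC1def
  have hC1 : 0 ≤ C1 := by positivity
  have heK : ∑ y ∈ Ioc 0 N, |F (y + K) - F y - a K| ≤ C1 := step1 K hK le_rfl
  have step2 : ∑ x ∈ Ioc 0 N, |F x - (m * x + b)| ≤ (1 + (N:ℝ)/K) * C1 := by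
    have hsum : (K:ℝ) * ∑ x ∈ Ioc 0 N, |F x - (m * x + b)| ≤ (K:ℝ) * C1 + (N:ℝ) * C1 := by
      rw [Finset.mul_sum]
      calc ∑ x ∈ Ioc 0 N, (K:ℝ) * |F x - (m * x + b)|
          ≤ ∑ x ∈ Ioc 0 N, ((∑ k' ∈ Ioc 0 K, |F (x + k') - F x - a k'|)
              + ∑ y ∈ Ioc 0 x, |F (y + K) - F y - a K|) := Finset.sum_le_sum fun x _ => habs2 x
        _ = (∑ x ∈ Ioc 0 N, ∑ k' ∈ Ioc 0 K, |F (x + k') - F x - a k'|)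
              + ∑ x ∈ Ioc 0 N, ∑ y ∈ Ioc 0 x, |F (y + K) - F y - a K| := Finset.sum_add_distrib
        _ ≤ (K:ℝ) * C1 + (N:ℝ) * C1 := by
            gcongr ?_ + ?_
            · rw [Finset.sum_comm]
              calc ∑ k' ∈ Ioc 0 K, ∑ x ∈ Ioc 0 N, |F (x + k') - F x - a k'|
                  ≤ ∑ k' ∈ Ioc 0 K, C1 := by
                    refine Finset.sum_le_sum fun k' hk' => ?_
                    have h := Finset.mem_Ioc.1 hk'
                    exact step1 k' h.1 h.2
                _ = (K:ℝ) * C1 := by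
                    rw [Finset.sum_const, Nat.card_Ioc, Nat.sub_zero, nsmul_eq_mul]
            · calc ∑ x ∈ Ioc 0 N, ∑ y ∈ Ioc 0 x, |F (y + K) - F y - a K|
                  ≤ ∑ x ∈ Ioc 0 N, ∑ y ∈ Ioc 0 N, |F (y + K) - F y - a K| := by
                    refine Finset.sum_le_sum fun x hx => ?_
                    exact Finset.sum_le_sum_of_subset_of_nonneg
                      (Finset.Ioc_subset_Ioc_right (Finset.mem_Ioc.1 hx).2) fun i _ _ => abs_nonneg _
                _ = (N:ℝ) * ∑ y ∈ Ioc 0 N, |F (y + K) - F y - a K| := by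
                    rw [Finset.sum_const, Nat.card_Ioc, Nat.sub_zero, nsmul_eq_mul]
                _ ≤ (N:ℝ) * C1 := by
                    have hN0 : (0:ℝ) ≤ (N:ℝ) := Nat.cast_nonneg N
                    nlinarith [heK]
    have heq : (K:ℝ) * ((1 + (N:ℝ)/K) * C1) = (K:ℝ) * C1 + (N:ℝ) * C1 := by field_simp
    exact le_of_mul_le_mul_left (hsum.trans_eq heq.symm) hK0
  refine ⟨m, b, ?_⟩
  have hIcc : Icc 1 M = Ioc 0 M := by
    ext z; simp only [Finset.mem_Icc, Finset.mem_Ioc]; omega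
  rw [hIcc]
  set G : ℕ → ℝ := fun x => |F x - (m * (x:ℝ) + b)| with hGdef
  have hGnn : ∀ i : ℕ, 0 ≤ G i := fun i => abs_nonneg _
  have reidx : ∀ (c A B : ℕ), ∑ x ∈ Ioc (c + A) (c + B), G x = ∑ y ∈ Ioc A B, G (c + y) := by
    intro c A B
    have h : Ioc (c + A) (c + B) = (Ioc A B).map (addLeftEmbedding c) := by
      rw [Finset.map_add_left_Ioc]
    rw [h, Finset.sum_map]
    rfl
  set S := ∑ x ∈ Ioc 0 N, G x with hSdef
  have hptw : ∀ y : ℕ, G (4*K + y)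
      ≤ |F (y + 2*K + 2*K) - F (y + 2*K) - F (y + 2*K) + F y| + 2 * G (2*K + y) + G y := by
    intro y
    have hidx : y + 2*K + 2*K = 4*K + y := by omega
    have hidx2 : y + 2*K = 2*K + y := by omega
    have hid : F (4*K + y) - (m * ((4*K + y : ℕ):ℝ) + b)
        = (F (y + 2*K + 2*K) - F (y + 2*K) - F (y + 2*K) + F y)
          + 2 * (F (2*K + y) - (m * ((2*K + y : ℕ):ℝ) + b))
          + -(F y - (m * (y:ℝ) + b)) := by
      rw [hidx, hidx2]; push_cast; ring
    show |F (4*K + y) - (m * ((4*K + y : ℕ):ℝ) + b)| ≤ _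
    rw [hid]
    refine le_trans (abs_add_three _ _ _) ?_
    have h2 : |2 * (F (2*K + y) - (m * ((2*K + y : ℕ):ℝ) + b))|
        = 2 * |F (2*K + y) - (m * ((2*K + y : ℕ):ℝ) + b)| := by
      rw [abs_mul]; norm_num
    rw [abs_neg, h2]
  have tail : ∑ x ∈ Ioc N M, G x ≤ C + 3 * S := by
    have e1 : N = 4*K + (N - 4*K) := by omega
    have e2 : M = 4*K + (N - 2*K) := by omega
    have h1 : ∑ x ∈ Ioc N M, G x = ∑ y ∈ Ioc (N - 4*K) (N - 2*K), G (4*K + y) := by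
      calc ∑ x ∈ Ioc N M, G x
          = ∑ x ∈ Ioc (4*K + (N - 4*K)) (4*K + (N - 2*K)), G x := by rw [← e1, ← e2]
        _ = _ := reidx _ _ _
    have b1 : ∑ y ∈ Ioc (N - 4*K) (N - 2*K),
        |F (y + 2*K + 2*K) - F (y + 2*K) - F (y + 2*K) + F y| ≤ C :=
      hD (2*K) (2*K) (N - 4*K) (N - 2*K) (by omega) (by omega) le_rfl le_rfl (by omega)
    have b2 : ∑ y ∈ Ioc (N - 4*K) (N - 2*K), G (2*K + y) ≤ S := by
      have h3 : ∑ y ∈ Ioc (N - 4*K) (N - 2*K), G (2*K + y)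
          = ∑ z ∈ Ioc (2*K + (N - 4*K)) (2*K + (N - 2*K)), G z := (reidx _ _ _).symm
      have e3 : 2*K + (N - 4*K) = N - 2*K := by omega
      have e4 : 2*K + (N - 2*K) = N := by omega
      rw [h3, e3, e4]
      exact Finset.sum_le_sum_of_subset_of_nonneg
        (Finset.Ioc_subset_Ioc_left (Nat.zero_le _)) fun i _ _ => hGnn i
    have b3 : ∑ y ∈ Ioc (N - 4*K) (N - 2*K), G y ≤ S := by
      refine Finset.sum_le_sum_of_subset_of_nonneg ?_ fun i _ _ => hGnn i
      intro z hz
      simp only [Finset.mem_Ioc] at hz ⊢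
      omega
    calc ∑ x ∈ Ioc N M, G x
        = ∑ y ∈ Ioc (N - 4*K) (N - 2*K), G (4*K + y) := h1
      _ ≤ ∑ y ∈ Ioc (N - 4*K) (N - 2*K),
            (|F (y + 2*K + 2*K) - F (y + 2*K) - F (y + 2*K) + F y| + 2 * G (2*K + y) + G y) :=
          Finset.sum_le_sum fun y _ => hptw y
      _ = (∑ y ∈ Ioc (N - 4*K) (N - 2*K), |F (y + 2*K + 2*K) - F (y + 2*K) - F (y + 2*K) + F y|)
            + 2 * (∑ y ∈ Ioc (N - 4*K) (N - 2*K), G (2*K + y))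
            + ∑ y ∈ Ioc (N - 4*K) (N - 2*K), G y := by
          rw [Finset.sum_add_distrib, Finset.sum_add_distrib, Finset.mul_sum]
      _ ≤ C + 3 * S := by linarith
  have split : S + ∑ x ∈ Ioc N M, G x = ∑ x ∈ Ioc 0 M, G x :=
    Finset.sum_Ioc_consecutive G (Nat.zero_le N) hNM
  have hfrac : (N:ℝ)/K ≤ (M:ℝ)/K :=
    (div_le_div_iff_of_pos_right hK0).2 (by exact_mod_cast hNM)
  have hSM : S ≤ (1 + (M:ℝ)/K)^2 * C := by
    have h0 : (0:ℝ) ≤ 1 + (N:ℝ)/K := by positivity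
    have h1 : (1 + (N:ℝ)/K) ≤ 1 + (M:ℝ)/K := by linarith
    have h2 : (1+(N:ℝ)/K)^2 ≤ (1+(M:ℝ)/K)^2 := pow_le_pow_left₀ h0 h1 2
    calc S ≤ (1 + (N:ℝ)/K) * C1 := step2
      _ = (1+(N:ℝ)/K)^2 * C := by rw [hC1def]; ring
      _ ≤ (1+(M:ℝ)/K)^2 * C := mul_le_mul_of_nonneg_right h2 hC.le
  linarith


private lemma crude (M : ℕ) (F : ℕ → ℝ) (C : ℝ) (hC : 0 < C) (hM : M ≤ 7)
    (h : ∑ x ∈ Icc 1 (M - 1 - 1), |F (x + 1 + 1) - F (x + 1) - F (x + 1) + F x| ≤ C) :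
    ∃ m b : ℝ, ∑ x ∈ Icc 1 M, |F x - (m * x + b)| ≤ 20000 * C := by
  refine ⟨F 2 - F 1, F 1 - (F 2 - F 1), ?_⟩
  have claim : ∀ x : ℕ, 1 ≤ x → x ≤ M →
      |F x - ((F 2 - F 1) * x + (F 1 - (F 2 - F 1)))| ≤ 3 ^ x * C := by
    intro x
    induction x using Nat.strong_induction_on with
    | _ x ih =>
      intro hx1 hxM
      match x, hx1 with
      | 1, _ =>
        rw [show F 1 - ((F 2 - F 1) * ((1:ℕ):ℝ) + (F 1 - (F 2 - F 1))) = 0 by push_cast; ring,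
          abs_zero]
        positivity
      | 2, _ =>
        rw [show F 2 - ((F 2 - F 1) * ((2:ℕ):ℝ) + (F 1 - (F 2 - F 1))) = 0 by push_cast; ring,
          abs_zero]
        positivity
      | (z+3), _ =>
        have ih1 := ih (z+2) (by omega) (by omega) (by omega)
        have ih2 := ih (z+1) (by omega) (by omega) (by omega)
        have hd : |F (z+1+1+1) - F (z+1+1) - F (z+1+1) + F (z+1)| ≤ C := by
          refine le_trans (Finset.single_le_sum (f := fun y =>
            |F (y + 1 + 1) - F (y + 1) - F (y + 1) + F y|)
            (fun i _ => abs_nonneg _) (Finset.mem_Icc.2 ⟨by omega, by omega⟩)) h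
        have hid : F (z+3) - ((F 2 - F 1) * ((z+3:ℕ):ℝ) + (F 1 - (F 2 - F 1)))
            = 2 * (F (z+2) - ((F 2 - F 1) * ((z+2:ℕ):ℝ) + (F 1 - (F 2 - F 1))))
              + -(F (z+1) - ((F 2 - F 1) * ((z+1:ℕ):ℝ) + (F 1 - (F 2 - F 1))))
              + (F (z+1+1+1) - F (z+1+1) - F (z+1+1) + F (z+1)) := by
          rw [show z+1+1+1 = z+3 by omega, show z+1+1 = z+2 by omega]
          push_cast; ring
        rw [hid]
        refine le_trans (abs_add_three _ _ _) ?_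
        rw [abs_neg, show |2 * (F (z+2) - ((F 2 - F 1) * ((z+2:ℕ):ℝ) + (F 1 - (F 2 - F 1))))|
          = 2 * |F (z+2) - ((F 2 - F 1) * ((z+2:ℕ):ℝ) + (F 1 - (F 2 - F 1)))| by
            rw [abs_mul]; norm_num]
        have hp : (1:ℝ) ≤ 3 ^ z := one_le_pow₀ (by norm_num)
        have e1 : (3:ℝ) ^ (z+3) = 27 * 3 ^ z := by rw [pow_add]; norm_num; ring
        have e2 : (3:ℝ) ^ (z+2) = 9 * 3 ^ z := by rw [pow_add]; norm_num; ring
        have e3 : (3:ℝ) ^ (z+1) = 3 * 3 ^ z := by rw [pow_add]; norm_num; ring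
        rw [e1] ; rw [e2] at ih1; rw [e3] at ih2
        nlinarith [mul_nonneg (sub_nonneg.2 hp) hC.le]
  calc ∑ x ∈ Icc 1 M, |F x - ((F 2 - F 1) * x + (F 1 - (F 2 - F 1)))|
      ≤ ∑ x ∈ Icc 1 M, 3 ^ x * C := by
        refine Finset.sum_le_sum fun x hx => ?_
        have hm := Finset.mem_Icc.1 hx
        exact claim x hm.1 hm.2
    _ ≤ ∑ x ∈ Icc 1 M, 3 ^ (7:ℕ) * C := by
        refine Finset.sum_le_sum fun x hx => ?_
        have hm := Finset.mem_Icc.1 hx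
        have : (3:ℝ) ^ x ≤ 3 ^ (7:ℕ) := pow_le_pow_right₀ (by norm_num) (by omega)
        nlinarith
    _ ≤ 20000 * C := by
        rw [Finset.sum_const, nsmul_eq_mul, Nat.card_Icc]
        have hcard : ((M + 1 - 1 : ℕ):ℝ) ≤ 7 := by exact_mod_cast (by omega : M + 1 - 1 ≤ 7)
        have h37 : (3:ℝ) ^ (7:ℕ) = 2187 := by norm_num
        rw [h37]
        nlinarith

theorem stmt_11 (η : ℝ) (hη : 0 < η) :
    ∃ c : ℝ, ∀ (M : ℕ) (F : ℕ → ℝ) (C : ℝ), 0 < C → 2 ≤ η * M →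
      (∀ k k' : ℕ, 1 ≤ k → 1 ≤ k' → (k : ℝ) ≤ η * M → (k' : ℝ) ≤ η * M →
        ∑ x ∈ Finset.Icc 1 (M - k - k'),
          |F (x + k + k') - F (x + k) - F (x + k') + F x| ≤ C) →
      ∃ m b : ℝ, ∑ x ∈ Finset.Icc 1 M, |F x - (m * x + b)| ≤ c * C := by
  refine ⟨4 * (17 + 4/η)^2 + 20000, ?_⟩
  intro M F C hC hηM hyp
  have hs : (0:ℝ) ≤ 17 + 4/η := by positivity
  by_cases hM7 : M ≤ 7
  · obtain ⟨m, b, hmb⟩ := crude M F C hC hM7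
      (hyp 1 1 le_rfl le_rfl (by push_cast; linarith) (by push_cast; linarith))
    refine ⟨m, b, hmb.trans ?_⟩
    have h4 : (0:ℝ) ≤ 4 * (17 + 4/η)^2 := by positivity
    nlinarith
  · push_neg at hM7
    have hM8 : 8 ≤ M := by omega
    have hMpos : (0:ℝ) < M := by exact_mod_cast (by omega : 0 < M)
    set K := min (⌊η * M / 2⌋₊) (M / 8) with hKdef
    have hfl1 : 1 ≤ ⌊η * M / 2⌋₊ := Nat.le_floor (by push_cast; linarith)
    have hdiv1 : 1 ≤ M / 8 := by omega
    have hK1 : 1 ≤ K := le_min hfl1 hdiv1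
    have hK0 : (0:ℝ) < K := by exact_mod_cast hK1
    have h8K : 8 * K ≤ M := by
      have := min_le_right (⌊η * M / 2⌋₊) (M / 8)
      omega
    have h2K : ((2 * K : ℕ):ℝ) ≤ η * M := by
      have h1 : (K:ℝ) ≤ η * M / 2 := by
        have hle : (K:ℝ) ≤ (⌊η * M / 2⌋₊ : ℝ) := by
          exact_mod_cast min_le_left (⌊η * M / 2⌋₊) (M / 8)
        exact hle.trans (Nat.floor_le (by positivity))
      push_cast
      linarith
    have hMK : (M:ℝ) ≤ (16 + 4/η) * K := by
      rcases le_or_gt (⌊η * M / 2⌋₊) (M / 8) with hc | hc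
      · have hKeq : K = ⌊η * M / 2⌋₊ := min_eq_left hc
        have h1 : η * M / 2 < (K:ℝ) + 1 := by
          rw [hKeq]
          exact Nat.lt_floor_add_one _
        have h2 : (K:ℝ) + 1 ≤ 2 * K := by
          have : (1:ℝ) ≤ K := by exact_mod_cast hK1
          linarith
        have h3 : η * M < 4 * K := by linarith
        have h4 : (M:ℝ) ≤ (4/η) * K := by
          rw [div_mul_eq_mul_div, le_div_iff₀ hη]
          nlinarith
        have h5 : (0:ℝ) ≤ 16 * K := by positivity
        linarith
      · have hKeq : K = M / 8 := min_eq_right hc.le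
        have h1 : (M:ℝ) ≤ 16 * K := by
          have : M ≤ 16 * K := by omega
          exact_mod_cast this
        have h2 : (0:ℝ) ≤ (4/η) * K := by positivity
        linarith
    have hMdivK : (M:ℝ) / K ≤ 16 + 4/η := by
      rw [div_le_iff₀ hK0]
      linarith [hMK]
    obtain ⟨m, b, hmb⟩ := main_aux M K F C hC hK1 h8K (fun k k' hk hk' hk2 hk'2 =>
      hyp k k' hk hk' (le_trans (by exact_mod_cast hk2) h2K)
        (le_trans (by exact_mod_cast hk'2) h2K))
    refine ⟨m, b, hmb.trans ?_⟩
    have h0 : (0:ℝ) ≤ 1 + (M:ℝ)/K := by positivity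
    have h1 : 1 + (M:ℝ)/K ≤ 17 + 4/η := by linarith
    have h2 : (1 + (M:ℝ)/K)^2 ≤ (17 + 4/η)^2 := pow_le_pow_left₀ h0 h1 2
    have h3 : 4 * (1 + (M:ℝ)/K)^2 + 1 ≤ 4 * (17 + 4/η)^2 + 20000 := by linarith
    exact mul_le_mul_of_nonneg_right h3 hC.le
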